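/- Let m ≥ 2 and let (F_k)_{0 ≤ k ≤ m−1} be the filtration in which F_k is the σ-algebra generated by (π(1),…,π(k)) (with F_0 trivial). Define M_0 := 0 and M_k := ( Σ_{j=1}^k p_{π(j)} − k/m ) / (m−k) for 0 ≤ k ≤ m−1. Then (M_k)_{0 ≤ k ≤ m−1} is a martingale with respect to (F_k)_{0 ≤ k ≤ m−1}. -/

import Mathlib

open MeasureTheory

noncomputable instance permMS (m : ℕ) : MeasurableSpace (Equiv.Perm (Fin m)) := ⊤

/-- The filtration in which the `k`-th σ-algebra is generated by `π ↦ (π(1), …, π(k))`. -/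
noncomputable def permFiltration (m : ℕ) : Filtration ℕ (permMS m) where
  seq k := ⨆ (j : Fin m) (_ : (j : ℕ) < k),
    MeasurableSpace.comap (fun π : Equiv.Perm (Fin m) => π j) (⊤ : MeasurableSpace (Fin m))
  mono' := fun a b hab =>
    iSup_mono fun j => iSup_le fun hj => le_iSup_of_le (lt_of_lt_of_le hj hab) le_rfl
  le' := fun _ => iSup_le fun _ => iSup_le fun _ => le_top

namespace Stmt4Aux

instance (m : ℕ) : MeasurableSingletonClass (Equiv.Perm (Fin m)) := ⟨fun _ => trivial⟩

def T (m k : ℕ) (π : Equiv.Perm (Fin m)) : Fin m → Fin m :=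
  fun j => if (j : ℕ) < k then π j else j

lemma filtration_le_comap (m k : ℕ) :
    permFiltration m k ≤ MeasurableSpace.comap (T m k) ⊤ := by
  refine iSup_le fun j => iSup_le fun hj => ?_
  have h : (fun π : Equiv.Perm (Fin m) => π j)
      = (fun g : Fin m → Fin m => g j) ∘ T m k := by
    funext π; simp [T, hj]
  rw [h, ← MeasurableSpace.comap_comp]
  exact MeasurableSpace.comap_mono le_top

lemma measurable_Mk (m k : ℕ) (p : Fin m → ℝ) :
    Measurable[permFiltration m k] (fun π : Equiv.Perm (Fin m) =>
      ((∑ j ∈ Finset.univ.filter (fun j : Fin m => (j : ℕ) < k), p (π j)) - (k : ℝ) / m) /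
        ((m : ℝ) - k)) := by
  apply Measurable.div _ measurable_const
  apply Measurable.sub _ measurable_const
  apply Finset.measurable_sum
  intro j hj
  have hj' : (j : ℕ) < k := by simpa using hj
  have h1 : Measurable[permFiltration m k] (fun π : Equiv.Perm (Fin m) => π j) := by
    rw [measurable_iff_comap_le]
    refine le_trans ?_ (le_iSup₂ (f := fun (j : Fin m) (_ : (j : ℕ) < k) =>
      MeasurableSpace.comap (fun π : Equiv.Perm (Fin m) => π j)
        (⊤ : MeasurableSpace (Fin m))) j hj')
    exact MeasurableSpace.comap_mono le_top
  exact (measurable_of_countable p).comp h1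

lemma measurePreserving_mulRight (m : ℕ) (τ : Equiv.Perm (Fin m)) :
    MeasurePreserving (fun π : Equiv.Perm (Fin m) => π * τ)
      (PMF.uniformOfFintype (Equiv.Perm (Fin m))).toMeasure
      (PMF.uniformOfFintype (Equiv.Perm (Fin m))).toMeasure := by
  have : Nonempty (Equiv.Perm (Fin m)) := ⟨1⟩
  refine ⟨measurable_of_countable _, ?_⟩
  refine MeasureTheory.Measure.ext_of_singleton fun π => ?_
  rw [Measure.map_apply (measurable_of_countable _) (measurableSet_singleton π)]
  have h : (fun π : Equiv.Perm (Fin m) => π * τ) ⁻¹' {π} = {π * τ⁻¹} := by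
    ext x; simp [mul_inv_eq_iff_eq_mul, eq_comm]
  rw [h, PMF.toMeasure_apply_singleton _ _ (measurableSet_singleton _),
    PMF.toMeasure_apply_singleton _ _ (measurableSet_singleton _)]
  simp [PMF.uniformOfFintype_apply]

lemma key (m : ℕ) (hm : 2 ≤ m) (p : Fin m → ℝ) (hsum : ∑ v, p v = 1)
    (k : ℕ) (hk : k + 1 ≤ m - 1) (s : Set (Equiv.Perm (Fin m)))
    (hs : MeasurableSet[permFiltration m k] s) :
    ∫ π in s, ((∑ j ∈ Finset.univ.filter (fun j : Fin m => (j : ℕ) < k), p (π j)) -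
        (k : ℝ) / m) / ((m : ℝ) - k)
        ∂(PMF.uniformOfFintype (Equiv.Perm (Fin m))).toMeasure
      = ∫ π in s, ((∑ j ∈ Finset.univ.filter (fun j : Fin m => (j : ℕ) < (k + 1)), p (π j)) -
        ((k + 1 : ℕ) : ℝ) / m) / ((m : ℝ) - (k + 1 : ℕ))
        ∂(PMF.uniformOfFintype (Equiv.Perm (Fin m))).toMeasure := by
  have hne : Nonempty (Equiv.Perm (Fin m)) := ⟨1⟩
  set μ := (PMF.uniformOfFintype (Equiv.Perm (Fin m))).toMeasure with hμ
  have hkm : k + 2 ≤ m := by omega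
  set khat : Fin m := ⟨k, by omega⟩ with hkhat
  set Sk : Equiv.Perm (Fin m) → ℝ :=
    fun π => ∑ j ∈ Finset.univ.filter (fun j : Fin m => (j : ℕ) < k), p (π j) with hSkdef
  -- s is a preimage under T
  obtain ⟨S, -, hS⟩ := filtration_le_comap m k s hs
  -- invariance of s under right multiplication by swaps of positions ≥ k
  have hinv : ∀ j : Fin m, k ≤ (j : ℕ) → ∀ π : Equiv.Perm (Fin m),
      π * Equiv.swap khat j ∈ s ↔ π ∈ s := by
    intro j hj π
    rw [← hS]
    simp only [Set.mem_preimage]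
    have hT : T m k (π * Equiv.swap khat j) = T m k π := by
      funext i
      by_cases hi : (i : ℕ) < k
      · have h1 : i ≠ khat := by
          intro h; rw [h] at hi; simp [hkhat] at hi
        have h2 : i ≠ j := by
          intro h; rw [h] at hi; omega
        simp [T, hi, Equiv.Perm.mul_apply, Equiv.swap_apply_of_ne_of_ne h1 h2]
      · simp [T, hi]
    rw [hT]
  have hint : ∀ f : Equiv.Perm (Fin m) → ℝ, Integrable f μ := fun f => .of_finite
  -- swap the value at position j for the value at position k
  have hswap : ∀ j : Fin m, k ≤ (j : ℕ) →
      ∫ π in s, p (π j) ∂μ = ∫ π in s, p (π khat) ∂μ := by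
    intro j hj
    have hτ : MeasurePreserving (fun π : Equiv.Perm (Fin m) => π * Equiv.swap khat j) μ μ :=
      measurePreserving_mulRight m _
    have hemb : MeasurableEmbedding (fun π : Equiv.Perm (Fin m) => π * Equiv.swap khat j) :=
      MeasurableEquiv.measurableEmbedding
        { toEquiv := Equiv.mulRight (Equiv.swap khat j),
          measurable_toFun := measurable_of_countable _,
          measurable_invFun := measurable_of_countable _ }
    have hpre : (fun π : Equiv.Perm (Fin m) => π * Equiv.swap khat j) ⁻¹' s = s := by
      ext π; simp only [Set.mem_preimage]; exact hinv j hj π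
    have h := hτ.setIntegral_preimage_emb hemb (fun π => p (π khat)) s
    rw [hpre] at h
    simp only [Equiv.Perm.mul_apply, Equiv.swap_apply_left] at h
    exact h
  set Fc := Finset.univ.filter (fun j : Fin m => ¬ (j : ℕ) < k) with hFc
  have hcard : Fc.card = m - k := by
    have h1 : Fc = (Finset.univ.filter (fun j : Fin m => (j : ℕ) < k))ᶜ := by
      ext j; simp [hFc]
    have h2 : Finset.univ.filter (fun j : Fin m => (j : ℕ) < k) = Finset.Iio khat := by
      ext j; simp [Fin.lt_def, hkhat]
    rw [h1, Finset.card_compl, h2, Fin.card_Iio]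
    simp [hkhat]
  have hsum1 : ∀ π : Equiv.Perm (Fin m), ∑ j ∈ Fc, p (π j) = 1 - Sk π := by
    intro π
    have h1 : Sk π + ∑ j ∈ Fc, p (π j) = 1 := by
      rw [hSkdef, hFc]
      rw [Finset.sum_filter_add_sum_filter_not]
      rw [Equiv.sum_comp π p]
      exact hsum
    linarith
  set N : ℝ := (μ s).toReal with hN
  set Sint : ℝ := ∫ π in s, Sk π ∂μ with hSint
  set P : ℝ := ∫ π in s, p (π khat) ∂μ with hP
  have hNS : ((m : ℝ) - k) * P = N - Sint := by
    have h1 : ∫ π in s, (∑ j ∈ Fc, p (π j)) ∂μ = ∑ j ∈ Fc, ∫ π in s, p (π j) ∂μ :=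
      integral_finset_sum _ fun j _ => (hint _).integrableOn
    have h2 : ∑ j ∈ Fc, ∫ π in s, p (π j) ∂μ = (Fc.card : ℝ) * P := by
      rw [Finset.sum_congr rfl fun j hj => hswap j (by simpa [hFc] using hj),
        Finset.sum_const, nsmul_eq_mul]
    have h3 : ∫ π in s, (∑ j ∈ Fc, p (π j)) ∂μ = N - Sint := by
      rw [integral_congr_ae (Filter.EventuallyEq.of_eq (funext hsum1))]
      rw [integral_sub (hint _).integrableOn (hint _).integrableOn]
      simp [hN, hSint, setIntegral_const, smul_eq_mul, measureReal_def]
    rw [h1, h2] at h3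
    rw [← h3, hcard]
    congr 2
    push_cast [Nat.cast_sub (by omega : k ≤ m)]
    ring
  -- compute both sides
  have hstep : ∀ π : Equiv.Perm (Fin m),
      (∑ j ∈ Finset.univ.filter (fun j : Fin m => (j : ℕ) < k + 1), p (π j))
        = Sk π + p (π khat) := by
    intro π
    have h1 : Finset.univ.filter (fun j : Fin m => (j : ℕ) < k + 1)
        = insert khat (Finset.univ.filter (fun j : Fin m => (j : ℕ) < k)) := by
      ext j
      simp only [Finset.mem_insert, Finset.mem_filter, Finset.mem_univ, true_and, Fin.ext_iff,
        hkhat]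
      omega
    rw [h1, Finset.sum_insert (by simp [hkhat])]
    rw [hSkdef]; ring
  have hL : ∫ π in s, (Sk π - (k : ℝ) / m) / ((m : ℝ) - k) ∂μ
      = (Sint - N * ((k : ℝ) / m)) / ((m : ℝ) - k) := by
    rw [integral_div]
    congr 1
    rw [integral_sub (hint _).integrableOn (hint _).integrableOn, setIntegral_const]
    simp [hSint, hN, smul_eq_mul, measureReal_def]
  have hR : ∫ π in s, ((∑ j ∈ Finset.univ.filter (fun j : Fin m => (j : ℕ) < k + 1), p (π j)) -
        ((k + 1 : ℕ) : ℝ) / m) / ((m : ℝ) - (k + 1 : ℕ)) ∂μ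
      = (Sint + P - N * (((k : ℝ) + 1) / m)) / ((m : ℝ) - ((k : ℝ) + 1)) := by
    have h0 : ∀ π : Equiv.Perm (Fin m),
        ((∑ j ∈ Finset.univ.filter (fun j : Fin m => (j : ℕ) < k + 1), p (π j)) -
          ((k + 1 : ℕ) : ℝ) / m) / ((m : ℝ) - (k + 1 : ℕ))
        = (Sk π + p (π khat) - ((k : ℝ) + 1) / m) / ((m : ℝ) - ((k : ℝ) + 1)) := by
      intro π; rw [hstep π]; push_cast; ring
    rw [integral_congr_ae (Filter.EventuallyEq.of_eq (funext h0))]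
    rw [integral_div]
    congr 1
    rw [integral_sub (hint _).integrableOn (hint _).integrableOn,
      integral_add (hint _).integrableOn (hint _).integrableOn, setIntegral_const]
    simp [hSint, hN, hP, smul_eq_mul, measureReal_def]
  rw [hL, hR]
  have hm0 : (m : ℝ) ≠ 0 := by positivity
  have ha : (m : ℝ) - k ≠ 0 := by
    have : (k : ℝ) < m := by exact_mod_cast (by omega : k < m)
    linarith
  have hb : (m : ℝ) - ((k : ℝ) + 1) ≠ 0 := by
    have : (k : ℝ) + 1 < m := by exact_mod_cast (by omega : k + 1 < m)
    linarith
  have hPval : P = (N - Sint) / ((m : ℝ) - k) := by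
    field_simp
    linarith [hNS]
  rw [hPval]
  field_simp
  ring

end Stmt4Aux

/-- Let `π` be a uniformly random permutation of `[m]`, `m ≥ 2`, and `p` a
probability mass function on `[m]`.  With `M_k = (Σ_{j=1}^k p_{π(j)} − k/m)/(m−k)` (so `M_0 = 0`),
the process `(M_k)_{0 ≤ k ≤ m−1}` is a martingale for the filtration generated by
`(π(1), …, π(k))`: it is adapted, and the conditional expectation of `M_{k+1}` given `F_k`
is a.e. equal to `M_k`. -/

theorem stmt4 (m : ℕ) (hm : 2 ≤ m) (p : Fin m → ℝ)
    (hp : ∀ v, 0 < p v) (hsum : ∑ v, p v = 1) :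
    let μ : Measure (Equiv.Perm (Fin m)) := (PMF.uniformOfFintype (Equiv.Perm (Fin m))).toMeasure
    let M : ℕ → Equiv.Perm (Fin m) → ℝ := fun k π =>
      ((∑ j ∈ Finset.univ.filter (fun j : Fin m => (j : ℕ) < k), p (π j)) - (k : ℝ) / m) /
        ((m : ℝ) - k)
    (∀ k, k ≤ m - 1 → StronglyMeasurable[(permFiltration m) k] (M k)) ∧
    (∀ k, k + 1 ≤ m - 1 → μ[M (k + 1)|(permFiltration m) k] =ᵐ[μ] M k) := by
  intro μ M
  have hne : Nonempty (Equiv.Perm (Fin m)) := ⟨1⟩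
  have hmeas : ∀ k, StronglyMeasurable[(permFiltration m) k] (M k) := fun k =>
    (Stmt4Aux.measurable_Mk m k p).stronglyMeasurable
  refine ⟨fun k _ => hmeas k, fun k hk => ?_⟩
  have hle : permFiltration m k ≤ permMS m := (permFiltration m).le k
  haveI : IsFiniteMeasure (μ.trim hle) := isFiniteMeasure_trim hle
  exact (ae_eq_condExp_of_forall_setIntegral_eq hle Integrable.of_finite
    (fun s _ _ => Integrable.integrableOn Integrable.of_finite)
    (fun s hs _ => Stmt4Aux.key m hm p hsum k hk s hs)
    (StronglyMeasurable.aestronglyMeasurable (hmeas k))).symm
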